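/- Fix k ≥ 1 and let p ∈ ℤ with p > k. Then for i ≥ 1: ∂_i(ĉ^{k-p}_p) = ĉ^{k-p+1}_{p-1} if i = p-k ≥ 2; ∂_i(ĉ^{k-p}_p) = 2f_k if i = p-k = 1; and ∂_i(ĉ^{k-p}_p) = 0 if i ≠ p-k. Also ∂_0(ĉ^{k-p}_p) = 2f̃^1_k if p = k+1, and ∂_0(ĉ^{k-p}_p) = 0 if p > k+1. In particular ∂_0(ĉ^{-1}_{k+1}) = 2f̃^1_k, ∂_1(ĉ^{-1}_{k+1}) = 2f_k, and (∂_0 + ∂_1)(ĉ^{-1}_{k+1}) = 2c^1_k. -/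

import Mathlib

/-!
The polynomial ring `R2 = ℚ[c₁, c₂, …, t₁, t₂, …, f_k]`: the variable `Sum.inl p`
(for `p ≥ 1`) is `c_p`, `Sum.inr i` (for `i ≥ 1`) is `t_i`, and `Sum.inl 0` is the
adjoined variable `f_k`.
-/

noncomputable section
open MvPolynomial Finset
open scoped Classical

abbrev R2 : Type := MvPolynomial (ℕ ⊕ ℕ) ℚ

/-- The variable `t_i`. -/
def Tv (i : ℕ) : R2 := X (Sum.inr i)

/-- The adjoined variable `f_k`. -/
def fk : R2 := X (Sum.inl 0)

/-- `c_p`, with the conventions `c_0 = 1` and `c_p = 0` for `p < 0`. -/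
def Cv (p : ℤ) : R2 := if p < 0 then 0 else if p = 0 then 1 else X (Sum.inl p.toNat)

/-- The complete homogeneous symmetric polynomial `h_j` evaluated on a list. -/
def hfun : List R2 → ℕ → R2
  | [], j => if j = 0 then 1 else 0
  | a :: L, j => ∑ i ∈ Finset.range (j + 1), a ^ i * hfun L (j - i)

/-- The elementary symmetric polynomial `e_j` evaluated on a list. -/
def efun : List R2 → ℕ → R2
  | [], j => if j = 0 then 1 else 0
  | _ :: _, 0 => 1
  | a :: L, j + 1 => efun L (j + 1) + a * efun L j

/-- The list `(-t_1, …, -t_r)`. -/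
def negT (r : ℕ) : List R2 := (List.range r).map fun i => -Tv (i + 1)

/-- `h^r_j(-t)`: complete homogeneous for `r ≥ 0`, elementary `e^{-r}_j(-t)` for `r < 0`. -/
def hmt (r : ℤ) (j : ℕ) : R2 :=
  if 0 ≤ r then hfun (negT r.toNat) j else efun (negT (-r).toNat) j

/-- `c^r_p := Σ_{j=0}^p c_{p-j} h^r_j(-t)`. -/
def cc (r p : ℤ) : R2 := ∑ j ∈ Finset.range (p.toNat + 1), Cv (p - j) * hmt r j

/-- `a^s_p := (1/2)c_p + Σ_{j=1}^p c_{p-j} h^s_j(-t)`. -/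
def aa (s p : ℤ) : R2 :=
  C (1/2 : ℚ) * Cv p + ∑ j ∈ Finset.Icc 1 p.toNat, Cv (p - j) * hmt s j

/-- `e^s_s(-t) = (-t_1)⋯(-t_s)`. -/
def eprod (s : ℤ) : R2 := ∏ i ∈ Finset.range s.toNat, -Tv (i + 1)

/-- `ĉ^r_p := c^r_p + (2f_k - c_k)e^{p-k}_{p-k}(-t)` when `r = k - p < 0`, else `c^r_p`. -/
def chat (k : ℕ) (r p : ℤ) : R2 :=
  if r = (k : ℤ) - p ∧ r < 0 then cc r p + (2 * fk - Cv k) * eprod (p - k) else cc r p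

/-- `f̃_k := c_k - f_k`. -/
def ftil (k : ℕ) : R2 := Cv k - fk

/-- `f^s_k := f_k + Σ_{j=1}^k c_{k-j} h^s_j(-t)`. -/
def fks (k : ℕ) (s : ℤ) : R2 := fk + ∑ j ∈ Finset.Icc 1 k, Cv ((k : ℤ) - j) * hmt s j

/-- `f̃^s_k := c_k - 2f_k + f^s_k`. -/
def ftils (k : ℕ) (s : ℤ) : R2 := Cv k - 2 * fk + fks k s

/-- Images of the variables under the automorphism `s_i` (depending on `k` via `s_0(f_k)`). -/
def sImgF (k : ℕ) : ℕ → ℕ ⊕ ℕ → R2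
  | 0, Sum.inr j => if j = 1 then -Tv 2 else if j = 2 then -Tv 1 else Tv j
  | 0, Sum.inl p =>
      if p = 0 then fk - (Tv 1 + Tv 2) * cc 2 ((k : ℤ) - 1)
      else Cv p - 2 * (Tv 1 + Tv 2) *
        ∑ j ∈ Finset.range p, (-1 : R2) ^ j *
          (∑ a ∈ Finset.range (j + 1), Tv 1 ^ a * Tv 2 ^ (j - a)) * Cv ((p : ℤ) - 1 - j)
  | i + 1, Sum.inr j =>
      if j = i + 1 then Tv (i + 2) else if j = i + 2 then Tv (i + 1) else Tv j
  | _ + 1, Sum.inl p => X (Sum.inl p)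

/-- The ring automorphism `s_i` of `R2`. -/
def sA (k i : ℕ) : R2 →ₐ[ℚ] R2 := aeval (sImgF k i)

/-- The fraction field of `R2`. -/
abbrev KK : Type := FractionRing R2

/-- The canonical embedding of `R2` into its fraction field. -/
def toK : R2 →+* KK := algebraMap R2 KK

/-- The denominator `t_1 + t_2` (for `i = 0`) resp. `t_{i+1} - t_i` (for `i ≥ 1`). -/
def dden (i : ℕ) : R2 := if i = 0 then Tv 1 + Tv 2 else Tv (i + 1) - Tv i

/-- The divided difference operator `∂_i`, with values in the fraction field. -/
def dd (k i : ℕ) (f : R2) : KK := (toK f - toK (sA k i f)) / toK (dden i)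


/-! ### auxiliary list machinery -/

/-- shifted elementary symmetric: `ep L n = efun L (n-1)`, `= 0` for `n = 0`. -/
def ep (L : List R2) : ℕ → R2
  | 0 => 0
  | n + 1 => efun L n

/-- doubly shifted. -/
def ep2 (L : List R2) : ℕ → R2
  | 0 => 0
  | n + 1 => ep L n

lemma efun_zero (L : List R2) : efun L 0 = 1 := by
  cases L <;> simp [efun]

lemma hfun_nil (j : ℕ) : hfun [] j = efun [] j := rfl

lemma efun_cons (a : R2) (L : List R2) (n : ℕ) :
    efun (a :: L) n = efun L n + a * ep L n := by
  cases n with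
  | zero => simp [efun_zero, ep]
  | succ n => simp [efun, ep]

lemma ep_cons (a : R2) (L : List R2) (n : ℕ) :
    ep (a :: L) n = ep L n + a * ep2 L n := by
  cases n with
  | zero => simp [ep, ep2]
  | succ n => simp [ep, ep2, efun_cons]

lemma efun_append (L : List R2) (a : R2) (n : ℕ) :
    efun (L ++ [a]) n = efun L n + a * ep L n := by
  induction L generalizing n with
  | nil =>
    cases n with
    | zero => simp [efun_zero, ep]
    | succ n =>
      cases n <;> simp [efun, ep, efun_zero]
  | cons b L ih =>
    cases n with
    | zero => simp [efun_zero, ep]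
    | succ n =>
      show efun (b :: (L ++ [a])) (n+1) = _
      rw [efun_cons, efun_cons, ih]
      have hep : ep (L ++ [a]) (n+1) = ep L (n+1) + a * ep2 L (n+1) := by
        cases n with
        | zero => simp [ep, ep2, efun_zero, ih]
        | succ n => simp only [ep, ep2, ih]
      rw [hep, ep_cons]
      ring

lemma ep_append (L : List R2) (a : R2) (n : ℕ) :
    ep (L ++ [a]) n = ep L n + a * ep2 L n := by
  cases n with
  | zero => simp [ep, ep2]
  | succ n =>
    cases n with
    | zero => simp [ep, ep2, efun_zero]
    | succ n => simp only [ep, ep2, efun_append]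

lemma efun_append2 (L : List R2) (a b : R2) (n : ℕ) :
    efun (L ++ [a] ++ [b]) n
      = efun L n + (a + b) * ep L n + (a * b) * ep2 L n := by
  rw [efun_append, efun_append, ep_append]; ring

lemma efun_eq_zero_of_lt (L : List R2) (n : ℕ) (h : L.length < n) : efun L n = 0 := by
  induction L generalizing n with
  | nil =>
    cases n with
    | zero => simp at h
    | succ n => simp [efun]
  | cons a L ih =>
    cases n with
    | zero => simp at h
    | succ n =>
      simp only [List.length_cons, Nat.succ_lt_succ_iff] at h
      rw [efun_cons]
      cases n with
      | zero => simp at h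
      | succ n =>
        rw [ih _ (by omega)]
        simp only [ep]
        rw [ih _ h, mul_zero, add_zero]

lemma efun_length_add_one (L : List R2) (a : R2) :
    efun (L ++ [a]) (L.length + 1) = a * efun L L.length := by
  rw [efun_append, efun_eq_zero_of_lt L _ (by omega)]
  simp [ep]

/-- maps through ring homs -/
lemma map_efun (φ : R2 →ₐ[ℚ] R2) (L : List R2) (n : ℕ) :
    φ (efun L n) = efun (L.map φ) n := by
  induction L generalizing n with
  | nil => cases n <;> simp [efun]
  | cons a L ih =>
    rw [efun_cons, List.map_cons, efun_cons, map_add, map_mul, ih]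
    congr 1
    cases n with
    | zero => simp [ep]
    | succ n => simp only [ep, ih]

lemma map_ep (φ : R2 →ₐ[ℚ] R2) (L : List R2) (n : ℕ) :
    φ (ep L n) = ep (L.map φ) n := by
  cases n with
  | zero => simp [ep]
  | succ n => simp only [ep, map_efun]

lemma map_ep2 (φ : R2 →ₐ[ℚ] R2) (L : List R2) (n : ℕ) :
    φ (ep2 L n) = ep2 (L.map φ) n := by
  cases n with
  | zero => simp [ep2]
  | succ n => simp only [ep2, map_ep]

/-! ### negT -/

lemma negT_zero : negT 0 = [] := by simp [negT]

lemma negT_succ (m : ℕ) : negT (m + 1) = negT m ++ [-Tv (m + 1)] := by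
  simp [negT, List.range_succ]

lemma negT_length (m : ℕ) : (negT m).length = m := by simp [negT]

lemma negT_one : negT 1 = [-Tv 1] := by simp [negT, List.range_succ]

lemma negT_two : negT 2 = [-Tv 1, -Tv 2] := by
  rw [show (2:ℕ) = 1 + 1 from rfl, negT_succ, negT_one]; rfl

/-- head decomposition of `negT (m+2)` -/
def TT (m : ℕ) : List R2 := (List.range m).map fun i => -Tv (i + 3)

lemma negT_cons2 (m : ℕ) : negT (m + 2) = -Tv 1 :: -Tv 2 :: TT m := by
  simp only [negT, TT]
  rw [show m + 2 = (m+1)+1 from rfl, List.range_succ_eq_map, List.range_succ_eq_map]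
  simp [List.map_map, Function.comp_def]

/-! ### action of `sA` on generators -/

lemma sA_apply_X (k i : ℕ) (v : ℕ ⊕ ℕ) : sA k i (X v) = sImgF k i v := by
  simp [sA]

lemma sA_succ_Tv (k i j : ℕ) :
    sA k (i + 1) (Tv j)
      = if j = i + 1 then Tv (i + 2) else if j = i + 2 then Tv (i + 1) else Tv j := by
  rw [show Tv j = X (Sum.inr j) from rfl, sA_apply_X]
  rfl

lemma sA_succ_fk (k i : ℕ) : sA k (i + 1) fk = fk := by
  rw [show fk = X (Sum.inl 0) from rfl, sA_apply_X]; rfl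

lemma sA_succ_Cv (k i : ℕ) (p : ℤ) : sA k (i + 1) (Cv p) = Cv p := by
  rcases lt_trichotomy p 0 with h | h | h
  · simp [Cv, h]
  · simp [Cv, h]
  · rw [show Cv p = X (Sum.inl p.toNat) by simp [Cv, h, not_lt.2 h.le, h.ne'], sA_apply_X]
    rfl

lemma sA0_Tv (k j : ℕ) :
    sA k 0 (Tv j) = if j = 1 then -Tv 2 else if j = 2 then -Tv 1 else Tv j := by
  rw [show Tv j = X (Sum.inr j) from rfl, sA_apply_X]; rfl

lemma sA0_fk (k : ℕ) : sA k 0 fk = fk - (Tv 1 + Tv 2) * cc 2 ((k : ℤ) - 1) := by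
  rw [show fk = X (Sum.inl 0) from rfl, sA_apply_X]; rfl

/-! ### hfun formulas -/

lemma hfun_single (a : R2) (j : ℕ) : hfun [a] j = a ^ j := by
  rw [hfun]
  rw [Finset.sum_eq_single j]
  · simp [hfun]
  · intro b hb hbj
    have : j - b ≠ 0 := by simp at hb; omega
    simp [hfun, this]
  · intro h; simp at h

lemma hfun_pair (a b : R2) (j : ℕ) :
    hfun [a, b] j = ∑ i ∈ Finset.range (j + 1), a ^ i * b ^ (j - i) := by
  rw [hfun]
  exact Finset.sum_congr rfl fun i _ => by rw [hfun_single]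

lemma hfun_pair_succ_left (a b : R2) (n : ℕ) :
    hfun [a, b] (n + 1) = a * hfun [a, b] n + b ^ (n + 1) := by
  rw [hfun_pair, hfun_pair, Finset.sum_range_succ' (fun i => a ^ i * b ^ (n + 1 - i))]
  rw [Finset.mul_sum]
  simp only [pow_zero, one_mul, Nat.sub_zero, pow_succ]
  congr 1
  exact Finset.sum_congr rfl fun i hi => by
    simp at hi
    rw [show n + 1 - (i + 1) = n - i by omega]
    ring

lemma hfun_pair_succ_right (a b : R2) (n : ℕ) :
    hfun [a, b] (n + 1) = b * hfun [a, b] n + a ^ (n + 1) := by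
  rw [hfun_pair, hfun_pair, Finset.sum_range_succ (fun i => a ^ i * b ^ (n + 1 - i))]
  rw [Finset.mul_sum]
  simp only [Nat.sub_self, pow_zero, mul_one]
  congr 1
  exact Finset.sum_congr rfl fun i hi => by
    simp only [Finset.mem_range] at hi
    rw [show n + 1 - i = (n - i) + 1 by omega, pow_succ]
    ring

lemma hfun_negT2 (j : ℕ) :
    hfun (negT 2) j
      = (-1 : R2) ^ j * ∑ a ∈ Finset.range (j + 1), Tv 1 ^ a * Tv 2 ^ (j - a) := by
  rw [negT_two, hfun_pair, Finset.mul_sum]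
  exact Finset.sum_congr rfl fun i hi => by
    simp only [Finset.mem_range] at hi
    rw [neg_pow (Tv 1), neg_pow (Tv 2)]
    rw [show (-1:R2)^j = (-1:R2)^i * (-1:R2)^(j-i) by rw [← pow_add]; congr 1; omega]
    ring

/-! ### Cv basics -/

lemma Cv_ofNat (n : ℕ) : Cv (n : ℤ) = if n = 0 then 1 else X (Sum.inl n) := by
  simp [Cv]

lemma Cv_neg {p : ℤ} (h : p < 0) : Cv p = 0 := by simp [Cv, h]

lemma hmt_zero_eq (j : ℕ) : hmt 0 j = efun [] j := by
  simp [hmt, negT_zero, hfun_nil]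

lemma hmt_neg_eq (m : ℕ) (r : ℤ) (hr : r = -(m + 1 : ℕ)) :
    hmt r j = efun (negT (m + 1)) j := by
  subst hr
  rw [hmt, if_neg (by push_cast; omega)]
  congr 2

lemma hmt_one (j : ℕ) : hmt 1 j = (-Tv 1) ^ j := by
  rw [hmt, if_pos (by norm_num)]
  show hfun (negT 1) j = _
  rw [negT_one, hfun_single]

lemma hmt_two (j : ℕ) : hmt 2 j = hfun (negT 2) j := rfl

/-! ### `s₀` on `c_p` -/

lemma cc_two_coe (q : ℕ) :
    cc 2 (q : ℤ) = ∑ j ∈ Finset.range (q + 1), Cv ((q : ℤ) - j) * hfun (negT 2) j := by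
  rw [cc]
  simp only [Int.toNat_natCast, hmt_two]

lemma sA0_Cv (k : ℕ) (q : ℕ) :
    sA k 0 (Cv q) = Cv q - 2 * (Tv 1 + Tv 2) * cc 2 ((q : ℤ) - 1) := by
  rcases Nat.eq_zero_or_pos q with h | h
  · subst h
    have h0 : cc 2 (((0:ℕ):ℤ) - 1) = 0 := by
      rw [show ((0:ℕ):ℤ) - 1 = -1 by norm_num, cc]
      rw [show ((-1:ℤ)).toNat = 0 from rfl, Finset.sum_range_one]
      rw [Cv_neg (by norm_num)]
      simp
    rw [h0]
    simp [Cv]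
  · rw [show Cv q = X (Sum.inl q) by rw [Cv_ofNat, if_neg (by omega)], sA_apply_X]
    show (if q = 0 then _ else _) = _
    rw [if_neg (by omega)]
    have hq : ((q:ℤ) - 1).toNat = q - 1 := by omega
    have hcc : cc 2 ((q:ℤ) - 1)
        = ∑ j ∈ Finset.range q, Cv ((q : ℤ) - 1 - j) * hfun (negT 2) j := by
      rw [cc, hq, show q - 1 + 1 = q by omega]
      exact Finset.sum_congr rfl fun j _ => by rw [hmt_two]
    rw [hcc, Cv_ofNat, if_neg (by omega)]
    congr 1
    rw [Finset.mul_sum, Finset.mul_sum]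
    refine Finset.sum_congr rfl fun j _ => ?_
    rw [hfun_negT2]
    ring

/-! ### invariance of `efun (negT m)` under `sA k i`, `i ≥ 1`, `i ≠ m` -/

lemma sA_succ_negTv_fixed (k i j : ℕ) (h1 : j ≠ i + 1) (h2 : j ≠ i + 2) :
    sA k (i + 1) (-Tv j) = -Tv j := by
  rw [map_neg, sA_succ_Tv, if_neg h1, if_neg h2]

lemma map_negT_fixed (k i m : ℕ) (h : m < i + 1) :
    (negT m).map (sA k (i + 1)) = negT m := by
  rw [negT, List.map_map]
  refine List.map_congr_left fun x hx => ?_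
  simp only [List.mem_range] at hx
  exact sA_succ_negTv_fixed k i (x + 1) (by omega) (by omega)

lemma sA_succ_efun_lt (k i m : ℕ) (h : m < i + 1) (n : ℕ) :
    sA k (i + 1) (efun (negT m) n) = efun (negT m) n := by
  rw [map_efun, map_negT_fixed k i m h]

lemma sA_succ_ep_lt (k i m : ℕ) (h : m < i + 1) (n : ℕ) :
    sA k (i + 1) (ep (negT m) n) = ep (negT m) n := by
  rw [map_ep, map_negT_fixed k i m h]

lemma sA_succ_ep2_lt (k i m : ℕ) (h : m < i + 1) (n : ℕ) :
    sA k (i + 1) (ep2 (negT m) n) = ep2 (negT m) n := by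
  rw [map_ep2, map_negT_fixed k i m h]

lemma sA_succ_efun_gt (k i d : ℕ) (n : ℕ) :
    sA k (i + 1) (efun (negT (i + 2 + d)) n) = efun (negT (i + 2 + d)) n := by
  induction d generalizing n with
  | zero =>
    -- m = i + 2 : negT (i+2) = negT i ++ [-Tv (i+1)] ++ [-Tv (i+2)]
    have hdec : negT (i + 2 + 0) = negT i ++ [-Tv (i + 1)] ++ [-Tv (i + 2)] := by
      rw [show i + 2 + 0 = (i + 1) + 1 from rfl, negT_succ, negT_succ]
    rw [hdec, efun_append2]
    rw [map_add, map_add, map_mul, map_mul, map_add, map_mul]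
    rw [sA_succ_efun_lt k i i (by omega), sA_succ_ep_lt k i i (by omega),
      sA_succ_ep2_lt k i i (by omega)]
    rw [map_neg, map_neg, sA_succ_Tv, sA_succ_Tv]
    rw [if_pos rfl, if_neg (by omega), if_pos rfl]
    ring
  | succ d ih =>
    have hdec : negT (i + 2 + (d + 1)) = negT (i + 2 + d) ++ [-Tv (i + 2 + d + 1)] := by
      rw [show i + 2 + (d + 1) = (i + 2 + d) + 1 from rfl, negT_succ]
    rw [hdec, efun_append]
    rw [map_add, map_mul]
    rw [ih]
    rw [sA_succ_negTv_fixed k i _ (by omega) (by omega)]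
    congr 2
    cases n with
    | zero => simp [ep]
    | succ n => simp only [ep, ih]

lemma sA_succ_efun (k i m : ℕ) (him : i + 1 ≠ m) (n : ℕ) :
    sA k (i + 1) (efun (negT m) n) = efun (negT m) n := by
  rcases lt_or_gt_of_ne him with h | h
  · obtain ⟨d, rfl⟩ : ∃ d, m = i + 2 + d := ⟨m - (i + 2), by omega⟩
    exact sA_succ_efun_gt k i d n
  · exact sA_succ_efun_lt k i m h n

/-! ### power series machinery -/

abbrev PS : Type := PowerSeries R2

open PowerSeries in
lemma coeff_mk_mul (f g : ℕ → R2) (n : ℕ) :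
    (PowerSeries.coeff (R := R2) n) (PowerSeries.mk f * PowerSeries.mk g)
      = ∑ j ∈ Finset.range (n + 1), f (n - j) * g j := by
  rw [PowerSeries.coeff_mul,
    Finset.Nat.sum_antidiagonal_eq_sum_range_succ
      (fun a b => (PowerSeries.coeff (R := R2) a) (PowerSeries.mk f) * (PowerSeries.coeff (R := R2) b) (PowerSeries.mk g))]
  rw [← Finset.sum_range_reflect]
  refine Finset.sum_congr rfl fun j hj => ?_
  simp only [Finset.mem_range] at hj
  have h1 : n - (n - j) = j := by omega
  simp [h1]

open PowerSeries in
lemma coeff_X_mul_mk' (S : PS) (n : ℕ) :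
    (PowerSeries.coeff (R := R2) n) (PowerSeries.X * S) = if n = 0 then 0 else (PowerSeries.coeff (R := R2) (n-1)) S := by
  cases n with
  | zero => simp [PowerSeries.coeff_zero_eq_constantCoeff]
  | succ n => rw [PowerSeries.coeff_succ_X_mul]; simp

/-- the linear factor `1 + a·u`. -/
def lin (a : R2) : PS := 1 + PowerSeries.C (R := R2) a * PowerSeries.X

/-- generating series of `efun L`. -/
def Es (L : List R2) : PS := PowerSeries.mk (efun L)

open PowerSeries in
lemma coeff_lin_mul (a : R2) (S : PS) (n : ℕ) :
    (PowerSeries.coeff (R := R2) n) (lin a * S)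
      = (PowerSeries.coeff (R := R2) n) S + a * (if n = 0 then 0 else (PowerSeries.coeff (R := R2) (n-1)) S) := by
  rw [lin, add_mul, one_mul, map_add, mul_assoc, PowerSeries.coeff_C_mul, coeff_X_mul_mk']

open PowerSeries in
lemma Es_cons (a : R2) (L : List R2) : Es (a :: L) = lin a * Es L := by
  refine PowerSeries.ext fun n => ?_
  rw [coeff_lin_mul, Es, Es, PowerSeries.coeff_mk, PowerSeries.coeff_mk, efun_cons]
  congr 1
  cases n with
  | zero => simp [ep]
  | succ n => simp [ep, PowerSeries.coeff_mk]

/-- generating series `H` with `(1+t₁u)(1+t₂u)·H = 1`. -/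
def Hs2 : PS := PowerSeries.mk (hfun (negT 2))

/-- generating series `G` with `(1+t₁u)·G = 1`; coefficients `(-t₁)^n`. -/
def Hs1 : PS := PowerSeries.mk (hfun (negT 1))

open PowerSeries in
lemma lin_mul_Hs1 : lin (Tv 1) * Hs1 = 1 := by
  refine PowerSeries.ext fun n => ?_
  rw [coeff_lin_mul, Hs1, PowerSeries.coeff_mk, PowerSeries.coeff_one]
  cases n with
  | zero => simp [negT_one, hfun_single]
  | succ n =>
    rw [if_neg (Nat.succ_ne_zero n), if_neg (Nat.succ_ne_zero n), PowerSeries.coeff_mk]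
    simp only [Nat.add_sub_cancel, negT_one, hfun_single]
    ring

open PowerSeries in
lemma lin2_mul_Hs2 : lin (Tv 2) * Hs2 = Hs1 := by
  refine PowerSeries.ext fun n => ?_
  rw [coeff_lin_mul, Hs2, Hs1, PowerSeries.coeff_mk, PowerSeries.coeff_mk]
  cases n with
  | zero => simp [negT_two, negT_one, hfun_pair, hfun_single]
  | succ n =>
    rw [if_neg (Nat.succ_ne_zero n), PowerSeries.coeff_mk]
    simp only [Nat.add_sub_cancel]
    rw [negT_two, negT_one, hfun_pair_succ_right, hfun_single]
    ring

lemma Np_mul_Hs2 : lin (Tv 1) * (lin (Tv 2) * Hs2) = 1 := by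
  rw [lin2_mul_Hs2, lin_mul_Hs1]

/-- generating series of the `c_p`. -/
def Cs : PS := PowerSeries.mk fun n => Cv n

/-- generating series of the `s₀(c_p)`. -/
def s0Cs (k : ℕ) : PS := PowerSeries.mk fun n => sA k 0 (Cv n)

open PowerSeries in
lemma coeff_Cs_mul_Hs2 (q : ℕ) : (PowerSeries.coeff (R := R2) q) (Cs * Hs2) = cc 2 (q : ℤ) := by
  rw [Cs, Hs2, coeff_mk_mul, cc_two_coe]
  refine Finset.sum_congr rfl fun j hj => ?_
  simp only [Finset.mem_range] at hj
  congr 2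
  omega

open PowerSeries in
lemma s0Cs_eq (k : ℕ) :
    s0Cs k = Cs - PowerSeries.C (R := R2) (2 * (Tv 1 + Tv 2)) * PowerSeries.X * (Cs * Hs2) := by
  refine PowerSeries.ext fun n => ?_
  rw [map_sub, mul_assoc, PowerSeries.coeff_C_mul, coeff_X_mul_mk']
  cases n with
  | zero =>
    rw [if_pos rfl, mul_zero, sub_zero, s0Cs, Cs, PowerSeries.coeff_mk, PowerSeries.coeff_mk,
      sA0_Cv]
    have h0 : cc 2 (((0:ℕ):ℤ) - 1) = 0 := by
      rw [show ((0:ℕ):ℤ) - 1 = -1 by norm_num, cc]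
      rw [show ((-1:ℤ)).toNat = 0 from rfl, Finset.sum_range_one]
      rw [Cv_neg (by norm_num)]
      simp
    rw [h0, mul_zero, sub_zero]
  | succ n =>
    rw [if_neg (Nat.succ_ne_zero n), Nat.add_sub_cancel, coeff_Cs_mul_Hs2, s0Cs, Cs,
      PowerSeries.coeff_mk, PowerSeries.coeff_mk, sA0_Cv]
    have : ((n:ℤ)) = ((n+1:ℕ):ℤ) - 1 := by push_cast; ring
    rw [← this]

lemma lin_neg_mul (a b : R2) :
    lin (-a) * lin (-b) = lin a * lin b - PowerSeries.C (R := R2) (2 * (a + b)) * PowerSeries.X := by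
  simp only [lin, map_neg, map_add, map_mul, map_ofNat]
  ring

/-- the key series identity `N·s₀(C) = M·C`. -/
lemma key0 (k : ℕ) :
    lin (Tv 1) * lin (Tv 2) * s0Cs k = lin (-Tv 1) * lin (-Tv 2) * Cs := by
  rw [s0Cs_eq, lin_neg_mul, mul_sub, sub_mul]
  rw [sub_right_inj]
  calc lin (Tv 1) * lin (Tv 2) * (PowerSeries.C (R := R2) (2 * (Tv 1 + Tv 2)) * PowerSeries.X * (Cs * Hs2))
      = (lin (Tv 1) * (lin (Tv 2) * Hs2)) * (PowerSeries.C (R := R2) (2 * (Tv 1 + Tv 2)) * PowerSeries.X * Cs) := by ring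
    _ = PowerSeries.C (R := R2) (2 * (Tv 1 + Tv 2)) * PowerSeries.X * Cs := by rw [Np_mul_Hs2, one_mul]

/-! ### `cc` as series coefficients -/

lemma Es_nil : Es [] = 1 := by
  refine PowerSeries.ext fun n => ?_
  rw [Es, PowerSeries.coeff_mk, PowerSeries.coeff_one]
  cases n <;> simp [efun]

open PowerSeries in
lemma cc_eq_coeff (r p : ℤ) (hp : 0 ≤ p) (L : List R2) (hL : ∀ j, hmt r j = efun L j) :
    cc r p = (PowerSeries.coeff (R := R2) p.toNat) (Cs * Es L) := by
  rw [cc, Cs, Es, coeff_mk_mul]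
  refine Finset.sum_congr rfl fun j hj => ?_
  simp only [Finset.mem_range] at hj
  rw [hL]
  congr 2
  omega

open PowerSeries in
lemma sA0_cc_eq_coeff (k : ℕ) (r p : ℤ) (hp : 0 ≤ p) (L : List R2)
    (hL : ∀ j, hmt r j = efun L j) :
    sA k 0 (cc r p) = (PowerSeries.coeff (R := R2) p.toNat) (s0Cs k * Es (L.map (sA k 0))) := by
  rw [cc, map_sum, s0Cs, Es, coeff_mk_mul]
  refine Finset.sum_congr rfl fun j hj => ?_
  simp only [Finset.mem_range] at hj
  rw [map_mul, hL, map_efun]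
  have hc : p - (j:ℤ) = ((p.toNat - j : ℕ) : ℤ) := by omega
  rw [hc]

/-- entries of `TT` are fixed by `s₀`. -/
lemma map_TT_sA0 (k m : ℕ) : (TT m).map (sA k 0) = TT m := by
  rw [TT, List.map_map]
  refine List.map_congr_left fun x hx => ?_
  show sA k 0 (-Tv (x+3)) = -Tv (x+3)
  rw [map_neg, sA0_Tv, if_neg (by omega), if_neg (by omega)]

lemma map_negT_sA0 (k m : ℕ) :
    (negT (m + 2)).map (sA k 0) = Tv 2 :: Tv 1 :: TT m := by
  rw [negT_cons2, List.map_cons, List.map_cons, map_TT_sA0]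
  rw [map_neg, map_neg, sA0_Tv, sA0_Tv]
  norm_num

/-- `s₀` fixes `cc (k-p) p` when `p - k ≥ 2`. -/
lemma sA0_cc_invariant (k m : ℕ) (r p : ℤ) (hp : 0 ≤ p)
    (hL : ∀ j, hmt r j = efun (negT (m + 2)) j) :
    sA k 0 (cc r p) = cc r p := by
  rw [sA0_cc_eq_coeff k r p hp _ hL, cc_eq_coeff r p hp _ hL, map_negT_sA0]
  congr 1
  rw [negT_cons2, Es_cons, Es_cons, Es_cons, Es_cons]
  calc s0Cs k * (lin (Tv 2) * (lin (Tv 1) * Es (TT m)))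
      = (lin (Tv 1) * lin (Tv 2) * s0Cs k) * Es (TT m) := by ring
    _ = (lin (-Tv 1) * lin (-Tv 2) * Cs) * Es (TT m) := by rw [key0]
    _ = Cs * (lin (-Tv 1) * (lin (-Tv 2) * Es (TT m))) := by ring

open PowerSeries in
lemma coeff_Cs_mul_Hs1 (q : ℕ) : (PowerSeries.coeff (R := R2) q) (Cs * Hs1) = cc 1 (q : ℤ) := by
  rw [Cs, Hs1, coeff_mk_mul, cc]
  rw [show ((q:ℤ)).toNat = q by omega]
  refine Finset.sum_congr rfl fun j hj => ?_
  simp only [Finset.mem_range] at hj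
  rw [hmt, if_pos (by norm_num)]
  have hc : (q:ℤ) - (j:ℤ) = ((q - j : ℕ) : ℤ) := by omega
  rw [hc]
  norm_num

/-- the `p = k+1` series computation. -/
lemma diff_series (k : ℕ) :
    Cs * Es (negT 1) - s0Cs k * Es [Tv 2]
      = PowerSeries.C (R := R2) (Tv 1 + Tv 2) * PowerSeries.X * (2 * (Cs * Hs1) - Cs) := by
  rw [negT_one, show ([-Tv 1] : List R2) = [-Tv 1] from rfl]
  rw [show ([-Tv 1] : List R2) = -Tv 1 :: [] from rfl, show ([Tv 2] : List R2) = Tv 2 :: [] from rfl]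
  rw [Es_cons, Es_cons, Es_nil, mul_one, mul_one, s0Cs_eq]
  have h2 : (Cs - PowerSeries.C (R := R2) (2 * (Tv 1 + Tv 2)) * PowerSeries.X * (Cs * Hs2)) * lin (Tv 2)
      = Cs * lin (Tv 2) - PowerSeries.C (R := R2) (2 * (Tv 1 + Tv 2)) * PowerSeries.X * (Cs * Hs1) := by
    rw [← lin2_mul_Hs2]
    ring
  rw [h2]
  simp only [lin, map_neg, map_add, map_mul, map_ofNat]
  ring

/-! ### hmt bridges -/

lemma hmt_bridge (k : ℕ) (p : ℤ) (m : ℕ) (hm : 1 ≤ m) (hmp : (m : ℤ) = p - k) (j : ℕ) :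
    hmt ((k : ℤ) - p) j = efun (negT m) j := by
  obtain ⟨m', rfl⟩ : ∃ m', m = m' + 1 := ⟨m - 1, by omega⟩
  exact hmt_neg_eq m' _ (by push_cast; omega)

lemma hmt_bridge' (k : ℕ) (p : ℤ) (m : ℕ) (hm : 1 ≤ m) (hmp : (m : ℤ) = p - k) (j : ℕ) :
    hmt ((k : ℤ) - p + 1) j = efun (negT (m - 1)) j := by
  rcases Nat.lt_or_ge m 2 with h | h
  · have hm1 : m = 1 := by omega
    subst hm1
    have : (k : ℤ) - p + 1 = 0 := by omega
    rw [this, hmt_zero_eq, negT_zero]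
  · obtain ⟨m', rfl⟩ : ∃ m', m = m' + 2 := ⟨m - 2, by omega⟩
    rw [show m' + 2 - 1 = m' + 1 from rfl]
    exact hmt_neg_eq m' _ (by push_cast; omega)

/-! ### the `t_m`-expansion of `cc` -/

lemma ccExp (k : ℕ) (p : ℤ) (hp : (k : ℤ) < p) :
    cc ((k : ℤ) - p) p
      = cc ((k : ℤ) - p + 1) p
        + (-Tv ((p - k).toNat)) * cc ((k : ℤ) - p + 1) (p - 1) := by
  set m : ℕ := (p - k).toNat with hm
  have hm1 : 1 ≤ m := by omega
  have hmp : (m : ℤ) = p - k := by omega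
  obtain ⟨m', hm'⟩ : ∃ m', m = m' + 1 := ⟨m - 1, by omega⟩
  have hneg : negT m = negT (m - 1) ++ [-Tv m] := by
    rw [hm']; rw [show m' + 1 - 1 = m' from rfl]; exact negT_succ m'
  have h1 : cc ((k : ℤ) - p) p
      = ∑ j ∈ Finset.range (p.toNat + 1),
          (Cv (p - j) * efun (negT (m - 1)) j
            + (-Tv m) * (Cv (p - j) * ep (negT (m - 1)) j)) := by
    rw [cc]
    refine Finset.sum_congr rfl fun j _ => ?_
    rw [hmt_bridge k p m hm1 hmp, hneg, efun_append]
    ring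
  rw [h1, Finset.sum_add_distrib, ← Finset.mul_sum]
  congr 1
  · rw [cc]
    exact Finset.sum_congr rfl fun j _ => by rw [hmt_bridge' k p m hm1 hmp]
  · congr 1
    have hpt : p.toNat = (p - 1).toNat + 1 := by omega
    rw [hpt, Finset.sum_range_succ' (fun j => Cv (p - j) * ep (negT (m - 1)) j)]
    have hz : Cv (p - (0:ℕ)) * ep (negT (m - 1)) 0 = 0 := by simp [ep]
    rw [hz, add_zero, cc]
    refine Finset.sum_congr rfl fun j _ => ?_
    rw [hmt_bridge' k p m hm1 hmp]
    show Cv (p - ((j:ℤ) + 1)) * efun (negT (m - 1)) j = _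
    congr 2
    ring

/-! ### eprod lemmas -/

lemma efun_length (L : List R2) : efun L L.length = L.prod := by
  induction L with
  | nil => simp [efun]
  | cons a L ih =>
    rw [List.length_cons, List.prod_cons]
    show efun (a :: L) (L.length + 1) = _
    rw [efun_cons]
    simp only [ep]
    rw [efun_eq_zero_of_lt L _ (by omega), ih, zero_add]

lemma eprod_eq_efun (m : ℕ) : (∏ i ∈ Finset.range m, -Tv (i + 1)) = efun (negT m) m := by
  have : (∏ i ∈ Finset.range m, -Tv (i + 1)) = (negT m).prod := by
    induction m with
    | zero => simp [negT_zero]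
    | succ m ih => rw [Finset.prod_range_succ, negT_succ, List.prod_append, ih]; simp
  rw [this]
  have h2 := efun_length (negT m)
  rw [negT_length] at h2
  exact h2.symm

lemma eprod_toNat (s : ℤ) : eprod s = efun (negT s.toNat) s.toNat := by
  rw [eprod, eprod_eq_efun]

lemma sA_succ_eprod (k i : ℕ) (s : ℤ) (him : i + 1 ≠ s.toNat) :
    sA k (i + 1) (eprod s) = eprod s := by
  rw [eprod_toNat, sA_succ_efun k i _ him]

lemma sA0_eprod (k m : ℕ) (s : ℤ) (hs : s.toNat = m + 2) :
    sA k 0 (eprod s) = eprod s := by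
  rw [eprod_toNat, hs, map_efun, map_negT_sA0]
  have hl2 : (Tv 2 :: Tv 1 :: TT m).length = m + 2 := by simp [TT]
  have hl1 : (negT (m + 2)).length = m + 2 := negT_length _
  have h2 := efun_length (Tv 2 :: Tv 1 :: TT m)
  rw [hl2] at h2
  have h1 := efun_length (negT (m + 2))
  rw [hl1] at h1
  rw [h2, h1, negT_cons2, List.prod_cons, List.prod_cons, List.prod_cons, List.prod_cons]
  ring

/-! ### `cc` invariance under `sA k (i+1)` -/

lemma sA_succ_cc (k i : ℕ) (r p : ℤ) (m : ℕ) (hL : ∀ j, hmt r j = efun (negT m) j)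
    (him : i + 1 ≠ m) : sA k (i + 1) (cc r p) = cc r p := by
  rw [cc, map_sum]
  refine Finset.sum_congr rfl fun j _ => ?_
  rw [map_mul, sA_succ_Cv, hL, sA_succ_efun k i m him]

/-! ### `cc 0` and `ftils` -/

lemma cc_zero (q : ℕ) : cc 0 (q : ℤ) = Cv q := by
  rw [cc, show ((q:ℤ)).toNat = q by omega]
  rw [Finset.sum_eq_single 0]
  · rw [hmt_zero_eq, efun_zero, mul_one]
    norm_num
  · intro j _ hj
    rw [hmt_zero_eq]
    have : efun ([] : List R2) j = 0 := by simp [efun, hj]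
    rw [this, mul_zero]
  · intro h; simp at h

lemma ftils_eq (k : ℕ) : ftils k 1 = cc 1 (k : ℤ) - fk := by
  rw [ftils, fks]
  have hcc : cc 1 (k : ℤ)
      = Cv ((k:ℤ)) + ∑ j ∈ Finset.Icc 1 k, Cv ((k : ℤ) - j) * hmt 1 j := by
    rw [cc, show ((k:ℤ)).toNat = k by omega,
      Finset.sum_range_succ' (fun j => Cv ((k:ℤ) - j) * hmt 1 j)]
    rw [add_comm]
    congr 1
    · rw [hmt_one, pow_zero, mul_one]
      norm_num
    · rw [← Finset.Ico_add_one_right_eq_Icc, Finset.sum_Ico_eq_sum_range]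
      refine Finset.sum_congr (by norm_num) fun j _ => ?_
      rw [show 1 + j = j + 1 by ring]
  rw [hcc]
  ring

/-! ### denominators -/

lemma Tv_add_ne : Tv 1 + Tv 2 ≠ 0 := by
  intro h
  have := congrArg (MvPolynomial.eval (fun _ => (1:ℚ))) h
  simp [Tv] at this

lemma Tv_sub_ne (i : ℕ) : Tv (i + 2) - Tv (i + 1) ≠ 0 := by
  intro h
  have := congrArg (MvPolynomial.eval
    (fun v => if v = Sum.inr (i + 2) then (1:ℚ) else 0)) h
  rw [map_sub] at this
  simp only [Tv, MvPolynomial.eval_X, map_zero] at this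
  have h2 : Sum.inr (i + 1) ≠ (Sum.inr (i + 2) : ℕ ⊕ ℕ) := by
    simp only [ne_eq, Sum.inr.injEq]
    omega
  rw [if_neg h2] at this
  simp at this

lemma dden_ne (i : ℕ) : dden i ≠ 0 := by
  cases i with
  | zero => simpa [dden] using Tv_add_ne
  | succ i => simpa [dden] using Tv_sub_ne i

lemma toK_ne {x : R2} (h : x ≠ 0) : toK x ≠ 0 := by
  simpa [toK, IsFractionRing.to_map_eq_zero_iff] using h

lemma dd_eq (k i : ℕ) (f g : R2) (h : f - sA k i f = dden i * g) : dd k i f = toK g := by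
  rw [dd, ← map_sub, h, map_mul]
  exact mul_div_cancel_left₀ _ (toK_ne (dden_ne i))

lemma dd_zero_of_fixed (k i : ℕ) (f : R2) (h : sA k i f = f) : dd k i f = 0 := by
  rw [dd, h, sub_self, zero_div]

/-! ### main case lemmas -/

lemma sA0_2fk_sub_Ck (k : ℕ) : sA k 0 (2 * fk - Cv (k : ℤ)) = 2 * fk - Cv (k : ℤ) := by
  rw [map_sub, map_mul, map_ofNat, sA0_fk, sA0_Cv k k]
  ring

lemma chat_pos (k : ℕ) (p : ℤ) (hp : (k : ℤ) < p) :
    chat k ((k : ℤ) - p) p = cc ((k : ℤ) - p) p + (2 * fk - Cv k) * eprod (p - k) := by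
  rw [chat, if_pos ⟨rfl, by omega⟩]

/-- `sA k (i+1)` fixes `chat` when `i+1 ≠ p-k`. -/
lemma main_ne (k i : ℕ) (p : ℤ) (hp : (k : ℤ) < p) (hne : ((i + 1 : ℕ) : ℤ) ≠ p - k) :
    sA k (i + 1) (chat k ((k : ℤ) - p) p) = chat k ((k : ℤ) - p) p := by
  have hm1 : 1 ≤ (p - (k:ℤ)).toNat := by omega
  have hmp : (((p - (k:ℤ)).toNat : ℕ) : ℤ) = p - k := by omega
  rw [chat_pos k p hp, map_add, map_mul, map_sub, map_mul, map_ofNat, sA_succ_fk,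
    sA_succ_Cv, sA_succ_cc k i _ p _ (hmt_bridge k p _ hm1 hmp) (by omega),
    sA_succ_eprod k i _ (by omega)]

/-- the divided-difference numerator identity for `i+1 = p-k`. -/
lemma main_eq (k i : ℕ) (p : ℤ) (hp : (k : ℤ) < p) (hm : ((i + 1 : ℕ) : ℤ) = p - k) :
    chat k ((k : ℤ) - p) p - sA k (i + 1) (chat k ((k : ℤ) - p) p)
      = dden (i + 1)
        * (cc ((k : ℤ) - p + 1) (p - 1) + (2 * fk - Cv k) * eprod (p - 1 - k)) := by
  have htn : (p - (k:ℤ)).toNat = i + 1 := by omega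
  have hm1 : 1 ≤ (p - (k:ℤ)).toNat := by omega
  have hmp : (((p - (k:ℤ)).toNat : ℕ) : ℤ) = p - k := by omega
  have hL' : ∀ j, hmt ((k : ℤ) - p + 1) j = efun (negT i) j := by
    intro j
    have := hmt_bridge' k p (i + 1) (by omega) (by omega) j
    rwa [show i + 1 - 1 = i from rfl] at this
  have hEx : chat k ((k : ℤ) - p) p
      = cc ((k : ℤ) - p + 1) p + (-Tv (i + 1)) * cc ((k : ℤ) - p + 1) (p - 1)
        + (2 * fk - Cv k) * (eprod (p - 1 - k) * (-Tv (i + 1))) := by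
    rw [chat_pos k p hp, ccExp k p hp, htn]
    congr 2
    rw [eprod, eprod, show (p - (k:ℤ)).toNat = i + 1 by omega,
      show (p - 1 - (k:ℤ)).toNat = i by omega, Finset.prod_range_succ]
  have hsA : sA k (i + 1) (chat k ((k : ℤ) - p) p)
      = cc ((k : ℤ) - p + 1) p + (-Tv (i + 2)) * cc ((k : ℤ) - p + 1) (p - 1)
        + (2 * fk - Cv k) * (eprod (p - 1 - k) * (-Tv (i + 2))) := by
    rw [hEx, map_add, map_add, map_mul, map_mul, map_mul, map_neg, map_sub, map_mul,
      map_ofNat, sA_succ_fk, sA_succ_Cv, sA_succ_Tv, if_pos rfl,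
      sA_succ_cc k i _ p i hL' (by omega),
      sA_succ_cc k i _ (p - 1) i hL' (by omega),
      sA_succ_eprod k i _ (by omega)]
  rw [hsA, hEx, dden, if_neg (Nat.succ_ne_zero i)]
  ring

/-- identification of the quotient with `chat` for `i ≥ 2`. -/
lemma chat_B (k : ℕ) (p : ℤ) (hp : (k : ℤ) + 1 < p) :
    chat k ((k : ℤ) - p + 1) (p - 1)
      = cc ((k : ℤ) - p + 1) (p - 1) + (2 * fk - Cv k) * eprod (p - 1 - k) := by
  rw [chat, if_pos ⟨by ring, by omega⟩]

/-- the `s₀` numerator identity for `p = k+1`. -/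
lemma main0_eq (k : ℕ) (hk : 1 ≤ k) :
    chat k (-1) ((k : ℤ) + 1) - sA k 0 (chat k (-1) ((k : ℤ) + 1))
      = dden 0 * (2 * ftils k 1) := by
  have hL : ∀ j, hmt (-1) j = efun (negT 1) j := fun j => hmt_neg_eq 0 (-1) (by norm_num)
  have hch : chat k (-1) ((k : ℤ) + 1)
      = cc (-1) ((k : ℤ) + 1) + (2 * fk - Cv k) * eprod ((k : ℤ) + 1 - k) := by
    rw [chat, if_pos ⟨by ring, by norm_num⟩]
  have hep : eprod ((k : ℤ) + 1 - k) = -Tv 1 := by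
    rw [eprod, show ((k : ℤ) + 1 - k).toNat = 1 by omega, Finset.prod_range_one]
  have hcc : cc (-1) ((k : ℤ) + 1)
      = (PowerSeries.coeff (R := R2) (k + 1)) (Cs * Es (negT 1)) := by
    rw [cc_eq_coeff (-1) ((k : ℤ) + 1) (by omega) _ hL,
      show ((k : ℤ) + 1).toNat = k + 1 by omega]
  have hccs : sA k 0 (cc (-1) ((k : ℤ) + 1))
      = (PowerSeries.coeff (R := R2) (k + 1)) (s0Cs k * Es [Tv 2]) := by
    rw [sA0_cc_eq_coeff k (-1) ((k : ℤ) + 1) (by omega) _ hL,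
      show ((k : ℤ) + 1).toNat = k + 1 by omega]
    congr 2
    rw [negT_one, List.map_cons, List.map_nil, map_neg, sA0_Tv, if_pos rfl, neg_neg]
  have hdiff : cc (-1) ((k : ℤ) + 1) - sA k 0 (cc (-1) ((k : ℤ) + 1))
      = (Tv 1 + Tv 2) * (2 * cc 1 (k : ℤ) - Cv (k : ℤ)) := by
    rw [hccs, hcc, ← map_sub, diff_series, mul_assoc, PowerSeries.coeff_C_mul,
      coeff_X_mul_mk', if_neg (Nat.succ_ne_zero k), Nat.add_sub_cancel, map_sub,
      show (2 : PS) * (Cs * Hs1) = PowerSeries.C (R := R2) 2 * (Cs * Hs1) by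
        rw [map_ofNat],
      PowerSeries.coeff_C_mul, coeff_Cs_mul_Hs1, Cs, PowerSeries.coeff_mk]
  have hepS : sA k 0 (eprod ((k : ℤ) + 1 - k)) = Tv 2 := by
    rw [hep, map_neg, sA0_Tv, if_pos rfl, neg_neg]
  have hs : sA k 0 (chat k (-1) ((k : ℤ) + 1))
      = sA k 0 (cc (-1) ((k : ℤ) + 1)) + (2 * fk - Cv k) * Tv 2 := by
    rw [hch, map_add, map_mul, sA0_2fk_sub_Ck, hepS]
  rw [hs, hch, hep]
  rw [show cc (-1) ((k:ℤ)+1) + (2 * fk - Cv ↑k) * -Tv 1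
        - (sA k 0 (cc (-1) ((k:ℤ)+1)) + (2 * fk - Cv ↑k) * Tv 2)
      = (cc (-1) ((k:ℤ)+1) - sA k 0 (cc (-1) ((k:ℤ)+1)))
        - (2 * fk - Cv ↑k) * (Tv 1 + Tv 2) by ring]
  rw [hdiff, dden, if_pos rfl, ftils_eq]
  ring

/-- `s₀` fixes `chat` when `p > k+1`. -/
lemma main0_gt (k : ℕ) (p : ℤ) (hk : 1 ≤ k) (hp : (k : ℤ) + 1 < p) :
    sA k 0 (chat k ((k : ℤ) - p) p) = chat k ((k : ℤ) - p) p := by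
  obtain ⟨m', hm'⟩ : ∃ m', (p - (k:ℤ)).toNat = m' + 2 := ⟨(p - (k:ℤ)).toNat - 2, by omega⟩
  have hL : ∀ j, hmt ((k : ℤ) - p) j = efun (negT (m' + 2)) j := by
    intro j
    rw [← hm']
    exact hmt_bridge k p _ (by omega) (by omega) j
  have hkp : (k : ℤ) < p := by omega
  rw [chat_pos k p hkp, map_add, map_mul, sA0_2fk_sub_Ck, sA0_eprod k m' _ hm',
    sA0_cc_invariant k m' _ p (by omega) hL]

theorem statement9 (k : ℕ) (hk : 1 ≤ k) (p : ℤ) (hp : (k : ℤ) < p) :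
    (∀ i : ℕ, 1 ≤ i →
      (2 ≤ i → (i : ℤ) = p - k →
        dd k i (chat k ((k : ℤ) - p) p) = toK (chat k ((k : ℤ) - p + 1) (p - 1))) ∧
      (i = 1 → (i : ℤ) = p - k → dd k i (chat k ((k : ℤ) - p) p) = toK (2 * fk)) ∧
      ((i : ℤ) ≠ p - k → dd k i (chat k ((k : ℤ) - p) p) = 0)) ∧
    ((k : ℤ) - p = -1 → dd k 0 (chat k ((k : ℤ) - p) p) = toK (2 * ftils k 1)) ∧
    ((k : ℤ) - p < -1 → dd k 0 (chat k ((k : ℤ) - p) p) = 0) ∧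
    dd k 0 (chat k (-1) ((k : ℤ) + 1)) = toK (2 * ftils k 1) ∧
    dd k 1 (chat k (-1) ((k : ℤ) + 1)) = toK (2 * fk) ∧
    dd k 0 (chat k (-1) ((k : ℤ) + 1)) + dd k 1 (chat k (-1) ((k : ℤ) + 1)) =
      toK (2 * cc 1 k) := by
  have hdd0 : dd k 0 (chat k (-1) ((k : ℤ) + 1)) = toK (2 * ftils k 1) :=
    dd_eq k 0 _ _ (main0_eq k hk)
  have hdd1 : dd k 1 (chat k (-1) ((k : ℤ) + 1)) = toK (2 * fk) := by
    have h := dd_eq k 1 _ _ (main_eq k 0 ((k : ℤ) + 1) (by omega) (by push_cast; ring))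
    rw [show (k : ℤ) - ((k : ℤ) + 1) = -1 by ring] at h
    rw [h]
    congr 1
    rw [show (-1 : ℤ) + 1 = 0 by ring, show (k : ℤ) + 1 - 1 = (k : ℤ) by ring, cc_zero,
      show eprod ((k : ℤ) - (k : ℤ)) = 1 by simp [eprod]]
    ring
  refine ⟨?_, ?_, ?_, hdd0, hdd1, ?_⟩
  · intro i hi
    obtain ⟨i', rfl⟩ : ∃ i', i = i' + 1 := ⟨i - 1, by omega⟩
    refine ⟨?_, ?_, ?_⟩
    · intro h2 hieq
      have hp1 : (k : ℤ) + 1 < p := by omega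
      have h := dd_eq k (i' + 1) _ _ (main_eq k i' p hp hieq)
      rw [h, chat_B k p hp1]
    · intro h1 hieq
      have hi0 : i' = 0 := by omega
      subst hi0
      have hp1 : p = (k : ℤ) + 1 := by omega
      have h := dd_eq k 1 _ _ (main_eq k 0 p hp hieq)
      rw [h]
      congr 1
      rw [hp1, show (k : ℤ) - ((k : ℤ) + 1) + 1 = 0 by ring,
        show (k : ℤ) + 1 - 1 = (k : ℤ) by ring, cc_zero,
        show eprod ((k : ℤ) - (k : ℤ)) = 1 by simp [eprod]]
      ring
    · intro hne
      exact dd_zero_of_fixed k (i' + 1) _ (main_ne k i' p hp hne)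
  · intro h1
    have hq1 : p = (k : ℤ) + 1 := by omega
    rw [show (k : ℤ) - p = -1 by omega, hq1]
    exact hdd0
  · intro hlt
    exact dd_zero_of_fixed k 0 _ (main0_gt k p hk (by omega))
  · rw [hdd0, hdd1, ← map_add]
    congr 1
    rw [ftils_eq]
    ring
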